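/- Let β, x₁,…,x_d, b₁, b₂,… be independent indeterminates and work in the ring of formal power series over ℤ in these variables. Let a = (a₁,…,a_d) ∈ ℤ^d with a_i + d - i ≥ 0 for every i. With H := ( Σ_{s≥0} C(i-d, s) β^s G^{(a_i+d-i)}_{a_i+j-i+s} )_{1≤i,j≤d} and M := ( (-1)^{d-i} e_{d-i}^{(j)}(x) )_{1≤i,j≤d}, where e_p^{(j)}(x) is the p-th elementary symmetric polynomial in x₁,…,x_d with x_j omitted and C(n,s) is the generalized binomial coefficient given by (1+x)^n = Σ_{s≥0} C(n,s)x^s, one has det H · det M = det( [x_j|b]^{a_i+d-i} (1+βx_j)^{i-1} )_{1≤i,j≤d}. -/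

import Mathlib

open scoped BigOperators

namespace GrothDet

/-- Index type for the indeterminates: `β`, `x₁,…,x_d`, `b₁,b₂,…`. -/
abbrev Idx (d : ℕ) := Unit ⊕ Fin d ⊕ ℕ

/-- The ambient ring: formal power series over `ℤ` in `β`, the `xᵢ` and the `bⱼ`. -/
abbrev R (d : ℕ) := MvPowerSeries (Idx d) ℤ

noncomputable def β (d : ℕ) : R d := MvPowerSeries.X (Sum.inl ())
noncomputable def x (d : ℕ) (i : Fin d) : R d := MvPowerSeries.X (Sum.inr (Sum.inl i))
noncomputable def b (d : ℕ) (ℓ : ℕ) : R d := MvPowerSeries.X (Sum.inr (Sum.inr ℓ))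

/-- `x ⊕ y := x + y + βxy`. -/
noncomputable def oplus (d : ℕ) (u v : R d) : R d := u + v + β d * u * v

/-- `[y|b]^k := (y ⊕ b₁)⋯(y ⊕ b_k)`. -/
noncomputable def fb (d : ℕ) (y : R d) (k : ℕ) : R d :=
  ∏ ℓ ∈ Finset.range k, oplus d y (b d ℓ)

/-- The multiplicative inverse of `1 + β * x j` (a unit since its constant term is `1`). -/
noncomputable def invOneAdd (d : ℕ) (j : Fin d) : R d :=
  MvPowerSeries.invOfUnit (1 + β d * x d j) 1

/-- `F^{(k)}(u) = ∏ᵢ (1+βxᵢ)/(1-xᵢu) · ∏_{ℓ=1}^k (1+(u+β)b_ℓ)` as a power series in `u`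
over `R d`; here `(1-xᵢu)⁻¹ = ∑_n xᵢⁿ uⁿ`. -/
noncomputable def F (d : ℕ) (k : ℕ) : PowerSeries (R d) :=
  (∏ i : Fin d,
      PowerSeries.C (1 + β d * x d i) * PowerSeries.mk fun n => x d i ^ n) *
    ∏ ℓ ∈ Finset.range k,
      (1 + (PowerSeries.X + PowerSeries.C (β d)) * PowerSeries.C (b d ℓ))

/-- `[u^t] F^{(k)}(u)`, extended by `0` in negative degrees `t`. -/
noncomputable def Fcoeff (d : ℕ) (k : ℕ) (t : ℤ) : R d :=
  if 0 ≤ t then PowerSeries.coeff t.toNat (F d k) else 0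

/-- The sum `∑_{s≥0} f s` of a family of power series such that `β^s ∣ f s`:
it is defined coefficientwise; on the coefficient of a monomial `n` only the
(finitely many) terms with `s ≤ n(β)` contribute, and the value is the limit of the
partial sums in the formal power series topology. -/
noncomputable def seriesSum (d : ℕ) (f : ℕ → R d) : R d :=
  (fun n => ∑ s ∈ Finset.range (n (Sum.inl ()) + 1), MvPowerSeries.coeff n (f s) :
    (Idx d →₀ ℕ) → ℤ)

/-- `G^{(k)}_m = ∑_{s≥0} (-β)^s [u^{m+s}] F^{(k)}(u)`. -/
noncomputable def G (d : ℕ) (k : ℕ) (m : ℤ) : R d :=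
  seriesSum d fun s => (-β d) ^ s * Fcoeff d k (m + s)

/-- The `p`-th elementary symmetric function of the family `f` restricted to `S`. -/
noncomputable def esym (d : ℕ) (S : Finset (Fin d)) (p : ℕ) (f : Fin d → R d) : R d :=
  ∑ t ∈ S.powersetCard p, ∏ i ∈ t, f i

/-- `x_i/(1+βx_i) = -x̄_i`. -/
noncomputable def xbar (d : ℕ) (i : Fin d) : R d := x d i * invOneAdd d i



variable {d : ℕ}

lemma coeff_seriesSum (f : ℕ → R d) (n : Idx d →₀ ℕ) :
    MvPowerSeries.coeff n (seriesSum d f) =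
      ∑ s ∈ Finset.range (n (Sum.inl ()) + 1), MvPowerSeries.coeff n (f s) := rfl

lemma beta_pow_dvd_iff {s : ℕ} {φ : R d} :
    β d ^ s ∣ φ ↔ ∀ n : Idx d →₀ ℕ, n (Sum.inl ()) < s → MvPowerSeries.coeff n φ = 0 :=
  MvPowerSeries.X_pow_dvd_iff

lemma eq_of_beta_dvd {u v : R d} (h : ∀ S : ℕ, β d ^ S ∣ u - v) : u = v := by
  rw [← sub_eq_zero]
  apply MvPowerSeries.ext
  intro n
  rw [map_zero]
  exact beta_pow_dvd_iff.mp (h (n (Sum.inl ()) + 1)) n (Nat.lt_succ_self _)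

lemma dvd_zsmul {z : ℤ} {r φ : R d} (h : φ ∣ r) : φ ∣ z • r := by
  rw [zsmul_eq_mul]; exact h.mul_left _

lemma seriesSum_sub_partial (f : ℕ → R d) (hf : ∀ s, β d ^ s ∣ f s) (S : ℕ) :
    β d ^ S ∣ seriesSum d f - ∑ s ∈ Finset.range S, f s := by
  rw [beta_pow_dvd_iff]
  intro n hn
  rw [map_sub, coeff_seriesSum, map_sum, sub_eq_zero]
  have h1 : n (Sum.inl ()) + 1 ≤ S := hn
  rw [← Finset.sum_range_add_sum_Ico (fun s => MvPowerSeries.coeff n (f s)) h1]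
  have hz : ∑ k ∈ Finset.Ico (n (Sum.inl ()) + 1) S, MvPowerSeries.coeff n (f k) = 0 :=
    Finset.sum_eq_zero (fun s hs => beta_pow_dvd_iff.mp (hf s) n
      (by simp only [Finset.mem_Ico] at hs; omega))
  rw [hz, add_zero]

lemma mul_seriesSum (c : R d) (f : ℕ → R d) (hf : ∀ s, β d ^ s ∣ f s) :
    c * seriesSum d f = seriesSum d fun s => c * f s := by
  apply eq_of_beta_dvd; intro S
  have h1 := seriesSum_sub_partial f hf S
  have h2 := seriesSum_sub_partial (fun s => c * f s) (fun s => (hf s).mul_left c) S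
  have e : c * seriesSum d f - seriesSum d (fun s => c * f s)
      = c * (seriesSum d f - ∑ s ∈ Finset.range S, f s)
        - ((seriesSum d fun s => c * f s) - ∑ s ∈ Finset.range S, c * f s) := by
    rw [mul_sub, Finset.mul_sum]; abel
  rw [e]; exact dvd_sub (h1.mul_left c) h2

lemma sum_seriesSum {ι : Type*} (T : Finset ι) (f : ι → ℕ → R d) :
    ∑ p ∈ T, seriesSum d (f p) = seriesSum d fun s => ∑ p ∈ T, f p s := by
  apply MvPowerSeries.ext; intro n
  rw [map_sum, coeff_seriesSum]
  simp only [coeff_seriesSum, map_sum]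
  exact Finset.sum_comm


lemma triangle_sum {M : Type*} [AddCommMonoid M] (S : ℕ) (F : ℕ × ℕ → M) :
    ∑ t ∈ Finset.range S, ∑ p ∈ Finset.HasAntidiagonal.antidiagonal t, F p
      = ∑ p ∈ (Finset.range S ×ˢ Finset.range S).filter (fun p => p.1 + p.2 < S), F p := by
  rw [← Finset.sum_biUnion]
  · apply Finset.sum_congr _ (fun _ _ => rfl)
    ext p
    simp only [Finset.mem_biUnion, Finset.mem_range, Finset.HasAntidiagonal.mem_antidiagonal, Finset.mem_filter,
      Finset.mem_product]
    constructor
    · rintro ⟨t, ht, rfl⟩; omega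
    · rintro ⟨⟨h1, h2⟩, h3⟩; exact ⟨p.1 + p.2, h3, rfl⟩
  · intro a _ c _ hac
    simp only [Finset.disjoint_left, Finset.mem_coe, Finset.HasAntidiagonal.mem_antidiagonal]
    rintro p rfl h; exact hac h

lemma collapse (z w : ℕ → ℤ) (g : ℕ → R d) :
    seriesSum d (fun s => z s • (β d ^ s * seriesSum d (fun s' => w s' • (β d ^ s' * g (s + s')))))
      = seriesSum d (fun t =>
          (∑ p ∈ Finset.HasAntidiagonal.antidiagonal t, z p.1 * w p.2) • (β d ^ t * g t)) := by
  apply eq_of_beta_dvd; intro S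
  set D : R d := ∑ p ∈ (Finset.range S ×ˢ Finset.range S).filter (fun p => p.1 + p.2 < S),
      (z p.1 * w p.2) • (β d ^ (p.1 + p.2) * g (p.1 + p.2)) with hD
  have hbig : ∀ p : ℕ × ℕ, ¬ (p.1 + p.2 < S) →
      β d ^ S ∣ (z p.1 * w p.2) • (β d ^ (p.1 + p.2) * g (p.1 + p.2)) := by
    intro p hp
    exact dvd_zsmul ((pow_dvd_pow (β d) (by omega)).mul_right _)
  -- RHS ≡ D
  have hR : β d ^ S ∣ seriesSum d (fun t =>
      (∑ p ∈ Finset.HasAntidiagonal.antidiagonal t, z p.1 * w p.2) • (β d ^ t * g t)) - D := by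
    have h1 := seriesSum_sub_partial
      (fun t => (∑ p ∈ Finset.HasAntidiagonal.antidiagonal t, z p.1 * w p.2) • (β d ^ t * g t))
      (fun t => dvd_zsmul (Dvd.intro _ rfl)) S
    have h2 : ∑ t ∈ Finset.range S,
        (∑ p ∈ Finset.HasAntidiagonal.antidiagonal t, z p.1 * w p.2) • (β d ^ t * g t) = D := by
      rw [hD, ← triangle_sum]
      apply Finset.sum_congr rfl
      intro t _
      rw [Finset.sum_smul]
      apply Finset.sum_congr rfl
      intro p hp
      rw [Finset.HasAntidiagonal.mem_antidiagonal] at hp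
      rw [hp]
    rwa [h2] at h1
  -- LHS ≡ D
  have hL : β d ^ S ∣ seriesSum d (fun s =>
      z s • (β d ^ s * seriesSum d (fun s' => w s' • (β d ^ s' * g (s + s'))))) - D := by
    have h1 := seriesSum_sub_partial
      (fun s => z s • (β d ^ s * seriesSum d (fun s' => w s' • (β d ^ s' * g (s + s')))))
      (fun s => dvd_zsmul (Dvd.intro _ rfl)) S
    -- partial outer sum ≡ double partial sum
    have h2 : β d ^ S ∣ (∑ s ∈ Finset.range S,
        z s • (β d ^ s * seriesSum d (fun s' => w s' • (β d ^ s' * g (s + s')))))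
        - ∑ s ∈ Finset.range S, ∑ s' ∈ Finset.range S,
            z s • (β d ^ s * (w s' • (β d ^ s' * g (s + s')))) := by
      rw [← Finset.sum_sub_distrib]
      apply Finset.dvd_sum
      intro s _
      have := seriesSum_sub_partial (fun s' => w s' • (β d ^ s' * g (s + s')))
        (fun s' => dvd_zsmul (Dvd.intro _ rfl)) S
      have e : z s • (β d ^ s * seriesSum d (fun s' => w s' • (β d ^ s' * g (s + s'))))
          - ∑ s' ∈ Finset.range S, z s • (β d ^ s * (w s' • (β d ^ s' * g (s + s'))))
          = z s • (β d ^ s * (seriesSum d (fun s' => w s' • (β d ^ s' * g (s + s')))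
              - ∑ s' ∈ Finset.range S, w s' • (β d ^ s' * g (s + s')))) := by
        rw [mul_sub, Finset.mul_sum, smul_sub, Finset.smul_sum]
      rw [e]
      exact dvd_zsmul (this.mul_left _)
    -- double partial sum = D + complement
    have h3 : ∑ s ∈ Finset.range S, ∑ s' ∈ Finset.range S,
          z s • (β d ^ s * (w s' • (β d ^ s' * g (s + s'))))
        = ∑ p ∈ Finset.range S ×ˢ Finset.range S,
            (z p.1 * w p.2) • (β d ^ (p.1 + p.2) * g (p.1 + p.2)) := by
      rw [Finset.sum_product]
      apply Finset.sum_congr rfl; intro s _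
      apply Finset.sum_congr rfl; intro s' _
      simp only [zsmul_eq_mul, Int.cast_mul, pow_add]
      ring
    have h4 : β d ^ S ∣ (∑ p ∈ Finset.range S ×ˢ Finset.range S,
        (z p.1 * w p.2) • (β d ^ (p.1 + p.2) * g (p.1 + p.2))) - D := by
      rw [hD, ← Finset.sum_filter_add_sum_filter_not (Finset.range S ×ˢ Finset.range S)
        (fun p => p.1 + p.2 < S) (fun p => (z p.1 * w p.2) • (β d ^ (p.1 + p.2) * g (p.1 + p.2)))]
      rw [add_sub_cancel_left]
      apply Finset.dvd_sum
      intro p hp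
      rw [Finset.mem_filter] at hp
      exact hbig p hp.2
    have hfin := dvd_add (dvd_add h1 h2) (h3 ▸ h4)
    have e : (seriesSum d (fun s =>
        z s • (β d ^ s * seriesSum d (fun s' => w s' • (β d ^ s' * g (s + s'))))) - D)
        = ((seriesSum d (fun s => z s • (β d ^ s * seriesSum d (fun s' => w s' • (β d ^ s' * g (s + s'))))) - ∑ s ∈ Finset.range S,
        z s • (β d ^ s * seriesSum d (fun s' => w s' • (β d ^ s' * g (s + s')))))
        + ((∑ s ∈ Finset.range S,
        z s • (β d ^ s * seriesSum d (fun s' => w s' • (β d ^ s' * g (s + s')))))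
        - ∑ s ∈ Finset.range S, ∑ s' ∈ Finset.range S,
            z s • (β d ^ s * (w s' • (β d ^ s' * g (s + s'))))))
        + ((∑ s ∈ Finset.range S, ∑ s' ∈ Finset.range S,
            z s • (β d ^ s * (w s' • (β d ^ s' * g (s + s'))))) - D) := by abel
    rwa [← e] at hfin
  have h := dvd_sub hL hR
  rwa [sub_sub_sub_cancel_right] at h

lemma choose_neg_one (k : ℕ) : Ring.choose (-1 : ℤ) k = (-1)^k := by
  rw [Ring.choose, show (-1:ℤ) - (k:ℤ) + 1 = -(k:ℤ) by ring, Ring.multichoose_neg_self]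

lemma choose_conv_neg_one (c : ℤ) (t : ℕ) :
    ∑ p ∈ Finset.HasAntidiagonal.antidiagonal t, Ring.choose c p.1 * (-1:ℤ)^p.2 = Ring.choose (c-1) t := by
  rw [show c - 1 = c + (-1) by ring, Ring.add_choose_eq t (Commute.all _ _)]
  exact Finset.sum_congr rfl (fun p _ => by rw [choose_neg_one])

lemma choosePartial_mul {A : Type*} [CommRing A] (y : A) (c : ℤ) (S : ℕ) :
    (∑ t ∈ Finset.range S, Ring.choose c t • y ^ t) * (1 + y)
      = (∑ t ∈ Finset.range S, Ring.choose (c + 1) t • y ^ t)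
        + (if S = 0 then 0 else Ring.choose c (S - 1) • y ^ S) := by
  induction S with
  | zero => simp
  | succ S ih =>
    rw [Finset.sum_range_succ, add_mul, ih, Finset.sum_range_succ]
    cases S with
    | zero =>
      simp only [Finset.range_zero, Finset.sum_empty, if_pos rfl, Ring.choose_zero_right,
        zero_add, Nat.succ_ne_zero, if_neg, Nat.add_sub_cancel]
      simp only [zsmul_eq_mul, pow_zero, pow_one, Ring.choose_zero_right]
      push_cast
      rw [Ring.choose_zero_right]
      ring
    | succ S' =>
      simp only [Nat.succ_ne_zero, if_neg, Nat.add_sub_cancel]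
      rw [Ring.choose_succ_succ c S']
      simp only [zsmul_eq_mul]
      push_cast
      ring

lemma seriesSum_choose_mul (yy : R d) (hy : ∀ t : ℕ, β d ^ t ∣ yy ^ t) (c : ℤ) :
    seriesSum d (fun t => Ring.choose c t • yy ^ t) * (1 + yy)
      = seriesSum d (fun t => Ring.choose (c + 1) t • yy ^ t) := by
  apply eq_of_beta_dvd; intro S
  have h1 := seriesSum_sub_partial (fun t => Ring.choose c t • yy ^ t)
    (fun t => dvd_zsmul (hy t)) S
  have h2 := seriesSum_sub_partial (fun t => Ring.choose (c + 1) t • yy ^ t)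
    (fun t => dvd_zsmul (hy t)) S
  have h3 : β d ^ S ∣ (∑ t ∈ Finset.range S, Ring.choose c t • yy ^ t) * (1 + yy)
      - ∑ t ∈ Finset.range S, Ring.choose (c + 1) t • yy ^ t := by
    rw [choosePartial_mul, add_sub_cancel_left]
    cases S with
    | zero => simp
    | succ S' => simp only [Nat.succ_ne_zero, if_neg]; exact dvd_zsmul (hy _)
  have e : seriesSum d (fun t => Ring.choose c t • yy ^ t) * (1 + yy)
        - seriesSum d (fun t => Ring.choose (c + 1) t • yy ^ t)
      = (seriesSum d (fun t => Ring.choose c t • yy ^ t)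
          - ∑ t ∈ Finset.range S, Ring.choose c t • yy ^ t) * (1 + yy)
        + ((∑ t ∈ Finset.range S, Ring.choose c t • yy ^ t) * (1 + yy)
            - ∑ t ∈ Finset.range S, Ring.choose (c + 1) t • yy ^ t)
        - (seriesSum d (fun t => Ring.choose (c + 1) t • yy ^ t)
            - ∑ t ∈ Finset.range S, Ring.choose (c + 1) t • yy ^ t) := by ring
  rw [e]
  exact dvd_sub (dvd_add (h1.mul_right _) h3) h2

lemma seriesSum_choose_mul_pow (yy : R d) (hy : ∀ t : ℕ, β d ^ t ∣ yy ^ t) (c : ℤ) (e : ℕ) :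
    seriesSum d (fun t => Ring.choose c t • yy ^ t) * (1 + yy) ^ e
      = seriesSum d (fun t => Ring.choose (c + e) t • yy ^ t) := by
  induction e with
  | zero => simp
  | succ e ih =>
    rw [pow_succ, ← mul_assoc, ih, seriesSum_choose_mul yy hy]
    norm_num [add_assoc]

lemma seriesSum_choose_zero (yy : R d) (hy : ∀ t : ℕ, β d ^ t ∣ yy ^ t) :
    seriesSum d (fun t => Ring.choose (0 : ℤ) t • yy ^ t) = 1 := by
  apply eq_of_beta_dvd; intro S
  have h1 := seriesSum_sub_partial (fun t => Ring.choose (0 : ℤ) t • yy ^ t)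
    (fun t => dvd_zsmul (hy t)) S
  cases S with
  | zero => exact one_dvd _
  | succ S' =>
    have e : ∑ t ∈ Finset.range (S' + 1), Ring.choose (0 : ℤ) t • yy ^ t = 1 := by
      rw [Finset.sum_eq_single 0]
      · simp [Ring.choose_zero_right]
      · intro t _ ht
        rw [Ring.choose_zero_pos ℤ (Nat.pos_of_ne_zero ht), zero_smul]
      · intro h; exact absurd (Finset.mem_range.mpr (Nat.succ_pos _)) h
    rwa [e] at h1

noncomputable def mkx (d : ℕ) (j : Fin d) : PowerSeries (R d) :=
  PowerSeries.mk fun n => x d j ^ n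

noncomputable def P (d k : ℕ) : PowerSeries (R d) :=
  ∏ ℓ ∈ Finset.range k,
    (1 + (PowerSeries.X + PowerSeries.C (β d)) * PowerSeries.C (b d ℓ))

noncomputable def Epoly (d : ℕ) (S : Finset (Fin d)) : PowerSeries (R d) :=
  ∏ r ∈ S, (1 - PowerSeries.C (x d r) * PowerSeries.X)

noncomputable def A (d : ℕ) : R d := ∏ r, (1 + β d * x d r)

lemma mkx_mul_geo (j : Fin d) :
    mkx d j * (1 - PowerSeries.C (x d j) * PowerSeries.X) = 1 := by
  apply PowerSeries.ext
  intro n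
  rw [mul_sub, mul_one, ← mul_assoc, map_sub]
  cases n with
  | zero =>
    simp [mkx, PowerSeries.coeff_zero_eq_constantCoeff, PowerSeries.coeff_one]
  | succ n =>
    rw [PowerSeries.coeff_succ_mul_X, PowerSeries.coeff_mul_C]
    simp [mkx, PowerSeries.coeff_one, pow_succ, mul_comm]

lemma esym_zero (S : Finset (Fin d)) (f : Fin d → R d) : esym d S 0 f = 1 := by
  simp [esym]

lemma esym_succ_empty (q : ℕ) (f : Fin d → R d) : esym d ∅ (q + 1) f = 0 := by
  rw [esym, Finset.powersetCard_eq_empty.mpr (by simp), Finset.sum_empty]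

lemma esym_card_lt {S : Finset (Fin d)} {q : ℕ} (h : S.card < q) (f : Fin d → R d) :
    esym d S q f = 0 := by
  simp [esym, Finset.powersetCard_eq_empty.mpr h]

lemma esym_insert {r : Fin d} {S : Finset (Fin d)} (hr : r ∉ S) (q : ℕ) (f : Fin d → R d) :
    esym d (insert r S) (q + 1) f = esym d S (q + 1) f + f r * esym d S q f := by
  rw [esym, Finset.powersetCard_succ_insert hr, Finset.sum_union]
  · congr 1
    rw [Finset.sum_image]
    · rw [esym, Finset.mul_sum]
      apply Finset.sum_congr rfl
      intro t ht
      rw [Finset.prod_insert]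
      intro hrt
      exact hr ((Finset.mem_powersetCard.mp ht).1 hrt)
    · intro t ht u hu huv
      have hrt : r ∉ t := fun h => hr ((Finset.mem_powersetCard.mp ht).1 h)
      have hru : r ∉ u := fun h => hr ((Finset.mem_powersetCard.mp hu).1 h)
      have : (insert r t).erase r = (insert r u).erase r := by rw [huv]
      rwa [Finset.erase_insert hrt, Finset.erase_insert hru] at this
  · rw [Finset.disjoint_right]
    intro t ht
    rw [Finset.mem_image] at ht
    obtain ⟨u, hu, rfl⟩ := ht
    intro hmem
    exact hr ((Finset.mem_powersetCard.mp hmem).1 (Finset.mem_insert_self r u))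

lemma coeff_Epoly (S : Finset (Fin d)) (q : ℕ) :
    PowerSeries.coeff q (Epoly d S) = (-1 : R d) ^ q * esym d S q (x d) := by
  induction S using Finset.induction_on generalizing q with
  | empty =>
    cases q with
    | zero => simp [Epoly, esym_zero, PowerSeries.coeff_one]
    | succ q => simp [Epoly, esym_succ_empty, PowerSeries.coeff_one]
  | insert _ _ hr ih =>
    rename_i r S
    rw [Epoly, Finset.prod_insert hr, sub_mul, one_mul, map_sub, mul_assoc]
    rw [show (∏ r' ∈ S, (1 - PowerSeries.C (x d r') * PowerSeries.X)) = Epoly d S from rfl]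
    cases q with
    | zero =>
      rw [PowerSeries.coeff_C_mul, ← mul_comm (Epoly d S) PowerSeries.X,
        PowerSeries.coeff_zero_mul_X, mul_zero, sub_zero, ih, esym_zero, esym_zero]
    | succ q =>
      rw [PowerSeries.coeff_C_mul, ← mul_comm (Epoly d S) PowerSeries.X,
        PowerSeries.coeff_succ_mul_X, ih, ih, esym_insert hr]
      ring

lemma F_eq (k : ℕ) : F d k = (∏ i : Fin d, PowerSeries.C (1 + β d * x d i) * mkx d i) * P d k := rfl

lemma F_mul_Epoly (j : Fin d) (k : ℕ) :
    F d k * Epoly d (Finset.univ \ {j}) = PowerSeries.C (A d) * (mkx d j * P d k) := by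
  have h1 : (∏ i : Fin d, PowerSeries.C (1 + β d * x d i) * mkx d i)
      = PowerSeries.C (A d) * ∏ i : Fin d, mkx d i := by
    rw [Finset.prod_mul_distrib, ← map_prod]
    rfl
  have h2 : (∏ i : Fin d, mkx d i) = mkx d j * ∏ r ∈ Finset.univ \ {j}, mkx d r :=
    Finset.prod_eq_mul_prod_sdiff_singleton_of_mem (Finset.mem_univ j) _
  have h3 : (∏ r ∈ Finset.univ \ {j}, mkx d r) * Epoly d (Finset.univ \ {j}) = 1 := by
    rw [Epoly, ← Finset.prod_mul_distrib]
    exact Finset.prod_eq_one (fun r _ => mkx_mul_geo r)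
  calc F d k * Epoly d (Finset.univ \ {j})
      = PowerSeries.C (A d) * (mkx d j *
          ((∏ r ∈ Finset.univ \ {j}, mkx d r) * Epoly d (Finset.univ \ {j}))) * P d k := by
        rw [F_eq, h1, h2]; ring
    _ = PowerSeries.C (A d) * (mkx d j * P d k) := by rw [h3]; ring

lemma coeff_mkx_mul_P (j : Fin d) (k t : ℕ) :
    PowerSeries.coeff (k + t) (mkx d j * P d k) = x d j ^ t * fb d (x d j) k := by
  induction k generalizing t with
  | zero =>
    simp [P, mkx, fb]
  | succ k ih =>
    have hP : P d (k + 1) = P d k *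
        (1 + (PowerSeries.X + PowerSeries.C (β d)) * PowerSeries.C (b d k)) :=
      Finset.prod_range_succ _ _
    have hfb : fb d (x d j) (k + 1) = fb d (x d j) k * oplus d (x d j) (b d k) :=
      Finset.prod_range_succ _ _
    have expand : mkx d j * P d (k + 1)
        = mkx d j * P d k + (mkx d j * P d k) * PowerSeries.X * PowerSeries.C (b d k)
          + (mkx d j * P d k) * PowerSeries.C (β d * b d k) := by
      rw [hP, map_mul]; ring
    rw [expand, map_add, map_add]
    rw [show k + 1 + t = k + (t + 1) by omega, ih]
    rw [PowerSeries.coeff_mul_C, show k + (t + 1) = (k + t) + 1 by omega,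
      PowerSeries.coeff_succ_mul_X, ih, PowerSeries.coeff_mul_C,
      show (k+t)+1 = k + (t+1) by omega, ih]
    rw [hfb, oplus]
    ring

lemma Fcoeff_natCast (k : ℕ) (n : ℕ) :
    Fcoeff d k (n : ℤ) = PowerSeries.coeff n (F d k) := by
  simp [Fcoeff]

lemma Fcoeff_neg (k : ℕ) {z : ℤ} (h : z < 0) : Fcoeff d k z = 0 := by
  simp [Fcoeff, not_le.mpr h]

lemma key (j : Fin d) (k t : ℕ) :
    ∑ q ∈ Finset.range d, ((-1 : R d) ^ q * esym d (Finset.univ \ {j}) q (x d))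
        * Fcoeff d k ((k : ℤ) + t - q)
      = A d * (x d j ^ t * fb d (x d j) k) := by
  classical
  set N : ℕ := k + t with hN
  have hcast : ∀ q : ℕ, (k : ℤ) + t - q = (N : ℤ) - q := by intro q; push_cast [hN]; ring
  have hcard : (Finset.univ \ {j} : Finset (Fin d)).card = d - 1 := by
    rw [Finset.card_sdiff_of_subset (Finset.singleton_subset_iff.mpr (Finset.mem_univ j))]
    simp
  have hd : 0 < d := j.pos
  -- terms as coeff of Epoly
  have hterm : ∀ q : ℕ, (-1 : R d) ^ q * esym d (Finset.univ \ {j}) q (x d)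
      = PowerSeries.coeff q (Epoly d (Finset.univ \ {j})) :=
    fun q => (coeff_Epoly _ q).symm
  have hEzero : ∀ q : ℕ, d ≤ q →
      PowerSeries.coeff q (Epoly d (Finset.univ \ {j})) = 0 := by
    intro q hq
    rw [coeff_Epoly, esym_card_lt (by omega) , mul_zero]
  -- extend to range (N + 1 + d)
  have hext : ∑ q ∈ Finset.range d, ((-1 : R d) ^ q * esym d (Finset.univ \ {j}) q (x d))
        * Fcoeff d k ((k : ℤ) + t - q)
      = ∑ q ∈ Finset.range (N + 1 + d),
          PowerSeries.coeff q (Epoly d (Finset.univ \ {j})) * Fcoeff d k ((N : ℤ) - q) := by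
    have e1 : ∑ q ∈ Finset.range d, ((-1 : R d) ^ q * esym d (Finset.univ \ {j}) q (x d))
          * Fcoeff d k ((k : ℤ) + t - q)
        = ∑ q ∈ Finset.range d,
            PowerSeries.coeff q (Epoly d (Finset.univ \ {j})) * Fcoeff d k ((N : ℤ) - q) :=
      Finset.sum_congr rfl (fun q _ => by rw [hterm, hcast])
    rw [e1]
    apply Finset.sum_subset (Finset.range_subset_range.mpr (by omega : d ≤ N + 1 + d))
    intro q _ hq
    rw [Finset.mem_range, not_lt] at hq
    rw [hEzero q (by omega), zero_mul]
  -- shrink to range (N + 1)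
  have hshrink : ∑ q ∈ Finset.range (N + 1 + d),
          PowerSeries.coeff q (Epoly d (Finset.univ \ {j})) * Fcoeff d k ((N : ℤ) - q)
      = ∑ q ∈ Finset.range (N + 1),
          PowerSeries.coeff q (Epoly d (Finset.univ \ {j})) * Fcoeff d k ((N : ℤ) - q) := by
    symm
    apply Finset.sum_subset (Finset.range_subset_range.mpr (by omega : N + 1 ≤ N + 1 + d))
    intro q _ hq
    rw [Finset.mem_range, not_lt] at hq
    rw [Fcoeff_neg k (by push_cast; omega : (N : ℤ) - q < 0), mul_zero]
  -- identify with coeff of product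
  have hprod : ∑ q ∈ Finset.range (N + 1),
          PowerSeries.coeff q (Epoly d (Finset.univ \ {j})) * Fcoeff d k ((N : ℤ) - q)
      = PowerSeries.coeff N (Epoly d (Finset.univ \ {j}) * F d k) := by
    rw [PowerSeries.coeff_mul, Finset.Nat.sum_antidiagonal_eq_sum_range_succ_mk]
    apply Finset.sum_congr rfl
    intro q hq
    rw [Finset.mem_range] at hq
    have : ((N : ℤ) - q) = ((N - q : ℕ) : ℤ) := by
      have : q ≤ N := by omega
      push_cast [this]
      ring
    rw [this, Fcoeff_natCast]
  rw [hext, hshrink, hprod, mul_comm (Epoly d (Finset.univ \ {j})) (F d k), F_mul_Epoly,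
    PowerSeries.coeff_C_mul, hN, coeff_mkx_mul_P]



lemma G_eq (k : ℕ) (m : ℤ) :
    G d k m = seriesSum d (fun s' => ((-1 : ℤ) ^ s') • (β d ^ s' * Fcoeff d k (m + s'))) := by
  unfold G
  refine congrArg (seriesSum d) (funext fun s' => ?_)
  rw [zsmul_eq_mul, neg_pow]
  push_cast
  ring

lemma constCoeff_one_add (j : Fin d) :
    MvPowerSeries.constantCoeff (1 + β d * x d j) = ((1 : ℤˣ) : ℤ) := by
  simp [β, x]

lemma one_add_mul_inv (j : Fin d) : (1 + β d * x d j) * invOneAdd d j = 1 :=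
  MvPowerSeries.mul_invOfUnit _ _ (constCoeff_one_add j)


/-- `det H · det M` equals the bi-alternant determinant. -/
theorem detH_mul_detM
    (d : ℕ) (a : Fin d → ℤ) (ha : ∀ i : Fin d, 0 ≤ a i + d - ((i : ℕ) + 1)) :
    Matrix.det (Matrix.of fun i j : Fin d =>
        seriesSum d fun s =>
          Ring.choose (((i : ℕ) : ℤ) + 1 - d) s •
            (β d ^ s * G d (a i + d - ((i : ℕ) + 1)).toNat (a i + (j : ℕ) - (i : ℕ) + s))) *
      Matrix.det (Matrix.of fun i j : Fin d =>
        (-1 : R d) ^ (d - 1 - (i : ℕ)) *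
          esym d (Finset.univ \ {j}) (d - 1 - (i : ℕ)) (x d))
      = Matrix.det (Matrix.of fun i j : Fin d =>
          fb d (x d j) (a i + d - ((i : ℕ) + 1)).toNat * (1 + β d * x d j) ^ (i : ℕ)) := by
  classical
  set k : Fin d → ℕ := fun i => (a i + d - ((i : ℕ) + 1)).toNat with hk
  have hkcast : ∀ i : Fin d, ((k i : ℕ) : ℤ) = a i + d - ((i : ℕ) + 1) :=
    fun i => Int.toNat_of_nonneg (ha i)
  set cc : Fin d → R d := fun j =>
    (∏ r ∈ Finset.univ \ {j}, (1 + β d * x d r)) * invOneAdd d j ^ (d - 1) with hcc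
  -- collapse of the H matrix entries
  have hH : ∀ i p : Fin d,
      (seriesSum d fun s =>
        Ring.choose (((i : ℕ) : ℤ) + 1 - d) s •
          (β d ^ s * G d (k i) (a i + (p : ℕ) - (i : ℕ) + s)))
      = seriesSum d (fun t => Ring.choose (((i : ℕ) : ℤ) - d) t •
          (β d ^ t * Fcoeff d (k i) (a i + (p : ℕ) - (i : ℕ) + t))) := by
    intro i p
    have e1 : (fun s => Ring.choose (((i : ℕ) : ℤ) + 1 - d) s •
          (β d ^ s * G d (k i) (a i + (p : ℕ) - (i : ℕ) + s)))
        = fun s => Ring.choose (((i : ℕ) : ℤ) + 1 - d) s •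
            (β d ^ s * seriesSum d (fun s' : ℕ => ((-1 : ℤ) ^ s') •
              (β d ^ s' * ((fun u : ℕ =>
                Fcoeff d (k i) (a i + (p : ℕ) - (i : ℕ) + (u : ℕ))) (s + s'))))) := by
      funext s
      rw [G_eq]
      refine congrArg _ (congrArg _ (congrArg (seriesSum d) (funext fun s' => ?_)))
      have harg : (a i + (p : ℕ) - (i : ℕ) + s) + s'
          = a i + (p : ℕ) - (i : ℕ) + ((s + s' : ℕ) : ℤ) := by push_cast; ring
      simp only [harg]
    rw [e1]
    exact (collapse (fun s => Ring.choose (((i : ℕ) : ℤ) + 1 - d) s)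
        (fun s' => (-1 : ℤ) ^ s')
        (fun u : ℕ => Fcoeff d (k i) (a i + (p : ℕ) - (i : ℕ) + (u : ℕ)))).trans
      (congrArg (seriesSum d) (funext fun t => by
        rw [choose_conv_neg_one,
          show (((i : ℕ) : ℤ) + 1 - d) - 1 = ((i : ℕ) : ℤ) - d by ring]))
  -- entries of the product matrix
  have hentry : ∀ i j : Fin d,
      (∑ p : Fin d,
        (seriesSum d (fun t => Ring.choose (((i : ℕ) : ℤ) - d) t •
          (β d ^ t * Fcoeff d (k i) (a i + (p : ℕ) - (i : ℕ) + t))))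
        * ((-1 : R d) ^ (d - 1 - (p : ℕ)) *
            esym d (Finset.univ \ {j}) (d - 1 - (p : ℕ)) (x d)))
      = cc j * (fb d (x d j) (k i) * (1 + β d * x d j) ^ (i : ℕ)) := by
    intro i j
    have hdvd : ∀ p : Fin d, ∀ t : ℕ, β d ^ t ∣ Ring.choose (((i : ℕ) : ℤ) - d) t •
        (β d ^ t * Fcoeff d (k i) (a i + (p : ℕ) - (i : ℕ) + t)) :=
      fun p t => dvd_zsmul (Dvd.intro _ rfl)
    have e1 : ∀ p : Fin d,
        (seriesSum d (fun t => Ring.choose (((i : ℕ) : ℤ) - d) t •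
          (β d ^ t * Fcoeff d (k i) (a i + (p : ℕ) - (i : ℕ) + t))))
        * ((-1 : R d) ^ (d - 1 - (p : ℕ)) *
            esym d (Finset.univ \ {j}) (d - 1 - (p : ℕ)) (x d))
        = seriesSum d (fun t =>
            ((-1 : R d) ^ (d - 1 - (p : ℕ)) *
              esym d (Finset.univ \ {j}) (d - 1 - (p : ℕ)) (x d)) *
            (Ring.choose (((i : ℕ) : ℤ) - d) t •
              (β d ^ t * Fcoeff d (k i) (a i + (p : ℕ) - (i : ℕ) + t)))) := by
      intro p
      rw [mul_comm, mul_seriesSum _ _ (hdvd p)]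
    rw [Finset.sum_congr rfl (fun p _ => e1 p), sum_seriesSum]
    have e2 : (fun t => ∑ p : Fin d,
          ((-1 : R d) ^ (d - 1 - (p : ℕ)) *
            esym d (Finset.univ \ {j}) (d - 1 - (p : ℕ)) (x d)) *
          (Ring.choose (((i : ℕ) : ℤ) - d) t •
            (β d ^ t * Fcoeff d (k i) (a i + (p : ℕ) - (i : ℕ) + t))))
        = fun t => (A d * fb d (x d j) (k i)) *
            (Ring.choose (((i : ℕ) : ℤ) - d) t • (β d * x d j) ^ t) := by
      funext t
      have e3 : ∑ p : Fin d,
          ((-1 : R d) ^ (d - 1 - (p : ℕ)) *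
            esym d (Finset.univ \ {j}) (d - 1 - (p : ℕ)) (x d)) *
          (Ring.choose (((i : ℕ) : ℤ) - d) t •
            (β d ^ t * Fcoeff d (k i) (a i + (p : ℕ) - (i : ℕ) + t)))
          = Ring.choose (((i : ℕ) : ℤ) - d) t • (β d ^ t *
              ∑ p : Fin d, ((-1 : R d) ^ (d - 1 - (p : ℕ)) *
                esym d (Finset.univ \ {j}) (d - 1 - (p : ℕ)) (x d)) *
                Fcoeff d (k i) (a i + (p : ℕ) - (i : ℕ) + t)) := by
        rw [Finset.mul_sum, Finset.smul_sum]
        refine Finset.sum_congr rfl (fun p _ => ?_)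
        rw [zsmul_eq_mul, zsmul_eq_mul]
        ring
      rw [e3]
      have e4 : ∑ p : Fin d, ((-1 : R d) ^ (d - 1 - (p : ℕ)) *
            esym d (Finset.univ \ {j}) (d - 1 - (p : ℕ)) (x d)) *
            Fcoeff d (k i) (a i + (p : ℕ) - (i : ℕ) + t)
          = ∑ q ∈ Finset.range d, ((-1 : R d) ^ q * esym d (Finset.univ \ {j}) q (x d))
              * Fcoeff d (k i) ((k i : ℤ) + t - q) := by
        rw [Fin.sum_univ_eq_sum_range (fun p => ((-1 : R d) ^ (d - 1 - p) *
            esym d (Finset.univ \ {j}) (d - 1 - p) (x d)) *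
            Fcoeff d (k i) (a i + (p : ℕ) - (i : ℕ) + t)) d]
        rw [← Finset.sum_range_reflect]
        refine Finset.sum_congr rfl (fun q hq => ?_)
        rw [Finset.mem_range] at hq
        have h1 : d - 1 - (d - 1 - q) = q := by omega
        have h2 : a i + ((d - 1 - q : ℕ) : ℤ) - (i : ℕ) + t = (k i : ℤ) + t - q := by
          rw [hkcast i]
          have : ((d - 1 - q : ℕ) : ℤ) = (d : ℤ) - 1 - q := by
            have : q + 1 ≤ d := hq
            push_cast [Nat.cast_sub (by omega : 1 + q ≤ d)]
            omega
          rw [this]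
          ring
        rw [h1, h2]
      rw [e4, key j (k i) t]
      rw [zsmul_eq_mul, zsmul_eq_mul, mul_pow]
      ring
    rw [e2]
    have hdvd2 : ∀ t : ℕ, β d ^ t ∣ Ring.choose (((i : ℕ) : ℤ) - d) t • (β d * x d j) ^ t :=
      fun t => dvd_zsmul (by rw [mul_pow]; exact Dvd.intro _ rfl)
    rw [← mul_seriesSum _ _ hdvd2]
    -- geometric series is the inverse power
    have hy : ∀ t : ℕ, β d ^ t ∣ (β d * x d j) ^ t :=
      fun t => by rw [mul_pow]; exact Dvd.intro _ rfl
    have hid : (((i : ℕ) : ℤ) - d) + ((d - (i : ℕ) : ℕ) : ℤ) = 0 := by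
      have : (i : ℕ) < d := i.isLt
      push_cast [Nat.cast_sub (le_of_lt this)]
      ring
    have hgeom : seriesSum d (fun t => Ring.choose (((i : ℕ) : ℤ) - d) t • (β d * x d j) ^ t)
        * (1 + β d * x d j) ^ (d - (i : ℕ)) = 1 := by
      rw [seriesSum_choose_mul_pow _ hy, hid, seriesSum_choose_zero _ hy]
    have hvw := one_add_mul_inv j
    have hg2 : seriesSum d (fun t => Ring.choose (((i : ℕ) : ℤ) - d) t • (β d * x d j) ^ t)
        = invOneAdd d j ^ (d - (i : ℕ)) := by
      calc seriesSum d (fun t => Ring.choose (((i : ℕ) : ℤ) - d) t • (β d * x d j) ^ t)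
          = seriesSum d (fun t => Ring.choose (((i : ℕ) : ℤ) - d) t • (β d * x d j) ^ t)
            * ((1 + β d * x d j) ^ (d - (i : ℕ)) * invOneAdd d j ^ (d - (i : ℕ))) := by
            rw [← mul_pow, hvw, one_pow, mul_one]
        _ = (seriesSum d (fun t => Ring.choose (((i : ℕ) : ℤ) - d) t • (β d * x d j) ^ t)
              * (1 + β d * x d j) ^ (d - (i : ℕ))) * invOneAdd d j ^ (d - (i : ℕ)) := by ring
        _ = invOneAdd d j ^ (d - (i : ℕ)) := by rw [hgeom, one_mul]
    rw [hg2]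
    -- final algebra with the unit
    have hA : A d = (1 + β d * x d j) * ∏ r ∈ Finset.univ \ {j}, (1 + β d * x d r) :=
      Finset.prod_eq_mul_prod_sdiff_singleton_of_mem (Finset.mem_univ j) _
    have hi : (i : ℕ) < d := i.isLt
    have hsplit1 : d - (i : ℕ) = (d - 1 - (i : ℕ)) + 1 := by omega
    have hsplit2 : d - 1 = (i : ℕ) + (d - 1 - (i : ℕ)) := by omega
    have hunit : (1 + β d * x d j) * invOneAdd d j ^ (d - (i : ℕ))
        = invOneAdd d j ^ (d - 1) * (1 + β d * x d j) ^ (i : ℕ) := by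
      have h3 : invOneAdd d j ^ (d - (i : ℕ))
          = invOneAdd d j ^ (d - 1 - (i : ℕ)) * invOneAdd d j := by
        rw [← pow_succ, show d - 1 - (i : ℕ) + 1 = d - (i : ℕ) from by omega]
      have h4 : invOneAdd d j ^ (d - 1)
          = invOneAdd d j ^ (i : ℕ) * invOneAdd d j ^ (d - 1 - (i : ℕ)) := by
        rw [← pow_add, show (i : ℕ) + (d - 1 - (i : ℕ)) = d - 1 from by omega]
      rw [h3, h4]
      have h1 : (1 + β d * x d j) * (invOneAdd d j ^ (d - 1 - (i : ℕ)) * invOneAdd d j)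
          = invOneAdd d j ^ (d - 1 - (i : ℕ)) * ((1 + β d * x d j) * invOneAdd d j) := by ring
      rw [h1, hvw, mul_one]
      have h2 : invOneAdd d j ^ (i : ℕ) * invOneAdd d j ^ (d - 1 - (i : ℕ))
            * (1 + β d * x d j) ^ (i : ℕ)
          = invOneAdd d j ^ (d - 1 - (i : ℕ))
            * ((1 + β d * x d j) * invOneAdd d j) ^ (i : ℕ) := by
        rw [mul_pow]; ring
      rw [h2, hvw, one_pow, mul_one]
    calc A d * fb d (x d j) (k i) * invOneAdd d j ^ (d - (i : ℕ))
        = (∏ r ∈ Finset.univ \ {j}, (1 + β d * x d r)) * fb d (x d j) (k i)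
            * ((1 + β d * x d j) * invOneAdd d j ^ (d - (i : ℕ))) := by rw [hA]; ring
      _ = (∏ r ∈ Finset.univ \ {j}, (1 + β d * x d r)) * fb d (x d j) (k i)
            * (invOneAdd d j ^ (d - 1) * (1 + β d * x d j) ^ (i : ℕ)) := by rw [hunit]
      _ = cc j * (fb d (x d j) (k i) * (1 + β d * x d j) ^ (i : ℕ)) := by rw [hcc]; ring
  -- determinant assembly
  rw [← Matrix.det_mul]
  have hmat : (Matrix.of fun i j : Fin d =>
        seriesSum d fun s =>
          Ring.choose (((i : ℕ) : ℤ) + 1 - d) s •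
            (β d ^ s * G d (k i) (a i + (j : ℕ) - (i : ℕ) + s))) *
      (Matrix.of fun i j : Fin d =>
        (-1 : R d) ^ (d - 1 - (i : ℕ)) *
          esym d (Finset.univ \ {j}) (d - 1 - (i : ℕ)) (x d))
      = Matrix.of (fun i j : Fin d =>
          cc j * (fb d (x d j) (k i) * (1 + β d * x d j) ^ (i : ℕ))) := by
    refine Matrix.ext fun i j => ?_
    rw [Matrix.mul_apply]
    simp only [Matrix.of_apply]
    rw [Finset.sum_congr rfl (fun p _ => by rw [hH i p])]
    exact hentry i j
  rw [hmat]
  erw [Matrix.det_mul_row cc (Matrix.of fun i j : Fin d => fb d (x d j) (k i) * (1 + β d * x d j) ^ (i : ℕ))]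
  have hccone : (∏ j : Fin d, cc j) = 1 := by
    rw [hcc]
    rw [Finset.prod_mul_distrib]
    have hswap : (∏ j : Fin d, ∏ r ∈ Finset.univ \ {j}, (1 + β d * x d r))
        = ∏ r : Fin d, (1 + β d * x d r) ^ (d - 1) := by
      rw [Finset.prod_comm' (fun j r => by
        simp [Finset.mem_sdiff, Finset.mem_singleton, eq_comm, ne_comm] : ∀ j r : Fin d,
          j ∈ Finset.univ ∧ r ∈ Finset.univ \ {j} ↔ j ∈ Finset.univ \ {r} ∧ r ∈ Finset.univ)]
      refine Finset.prod_congr rfl (fun r _ => ?_)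
      rw [Finset.prod_const]
      congr 1
      rw [Finset.card_sdiff_of_subset (Finset.singleton_subset_iff.mpr (Finset.mem_univ r))]
      simp
    rw [hswap, ← Finset.prod_mul_distrib]
    refine Finset.prod_eq_one (fun r _ => ?_)
    rw [← mul_pow, one_add_mul_inv r, one_pow]
  rw [hccone, one_mul]

end GrothDet
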